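/- Let S be an order-n Latin square over {1,…,n}, let m ≥ 1, for each s ∈ {1,…,n} let A_s = {(s−1)m+1, …, sm}, and for each (i,j) ∈ {1,…,n}² let Q_{i,j} be an m×m matrix over alphabet A_{S(i,j)} in which every symbol of A_{S(i,j)} occurs exactly once in every row and column. Let L be the order-nm Latin square defined block-wise by L((i−1)m+r, (j−1)m+c) = Q_{i,j}(r,c). Suppose S has ℓ pairwise disjoint transversals T₁, …, T_ℓ, and suppose that for every cell (i,j) belonging to one of T₁, …, T_ℓ, the square Q_{i,j} admits a decomposition into m pairwise disjoint transversals. Then L contains ℓ·m pairwise disjoint transversals, each contained in the union of the blocks corresponding to cells of T₁ ∪ ⋯ ∪ T_ℓ. -/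
import Mathlib


/-- An order-`n` Latin square over the alphabet `Fin n`. -/
def IsLatinSquare {n : ℕ} (L : Fin n → Fin n → Fin n) : Prop :=
  (∀ i, Function.Bijective (L i)) ∧ ∀ j, Function.Bijective fun i => L i j

/-- A transversal of `L`, encoded by the permutation sending each row to the
column of its chosen cell. -/
def IsTransversal {n : ℕ} (L : Fin n → Fin n → Fin n) (σ : Equiv.Perm (Fin n)) : Prop :=
  Function.Bijective fun i => L i (σ i)

/-- The index `(i-1)·m + r` (0-indexed: `i·m + r`) of the `r`-th row/column/symbol
of the `i`-th block. Under this encoding, `Fin (n*m)`-valued Latin squares with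
symbol `blockIdx s q` correspond to squares over the alphabets
`A_s = {(s-1)m+1, …, sm}` of the paper. -/
def blockIdx {n m : ℕ} (i : Fin n) (r : Fin m) : Fin (n * m) :=
  ⟨i.1 * m + r.1, by
    have h1 : i.1 + 1 ≤ n := i.2
    have h2 : r.1 < m := r.2
    calc i.1 * m + r.1 < i.1 * m + m := by omega
      _ = (i.1 + 1) * m := by ring
      _ ≤ n * m := Nat.mul_le_mul_right m h1⟩

/-- `blockIdx` as an equivalence `Fin n × Fin m ≃ Fin (n * m)`. -/
def blockEquiv {n m : ℕ} (hm : 1 ≤ m) : Fin n × Fin m ≃ Fin (n * m) where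
  toFun p := blockIdx p.1 p.2
  invFun x := (⟨x.1 / m, by
      have := x.2
      exact (Nat.div_lt_iff_lt_mul hm).2 (by omega)⟩,
    ⟨x.1 % m, Nat.mod_lt _ hm⟩)
  left_inv p := by
    obtain ⟨⟨i, hi⟩, ⟨r, hr⟩⟩ := p
    simp only [blockIdx, Prod.mk.injEq, Fin.mk.injEq]
    constructor
    · rw [add_comm, Nat.add_mul_div_right _ _ (by omega : 0 < m), Nat.div_eq_of_lt hr,
        Nat.zero_add]
    · rw [add_comm, Nat.add_mul_mod_self_right, Nat.mod_eq_of_lt hr]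
  right_inv x := by
    simp only [blockIdx, Fin.mk.injEq, Fin.ext_iff]
    rw [Nat.mul_comm]; exact Nat.div_add_mod _ _

theorem blockIdx_inj {n m : ℕ} (hm : 1 ≤ m) {i j : Fin n} {r c : Fin m}
    (h : blockIdx i r = blockIdx j c) : i = j ∧ r = c := by
  have := (blockEquiv hm).injective (a₁ := (i, r)) (a₂ := (j, c)) h
  exact ⟨congrArg Prod.fst this, congrArg Prod.snd this⟩

theorem block_construction_disjoint_transversals (n m ℓ : ℕ) (hm : 1 ≤ m)
    (S : Fin n → Fin n → Fin n) (hS : IsLatinSquare S)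
    (Q : Fin n → Fin n → Fin m → Fin m → Fin m) (hQ : ∀ i j, IsLatinSquare (Q i j))
    (L : Fin (n * m) → Fin (n * m) → Fin (n * m))
    (hL : ∀ (i j : Fin n) (r c : Fin m),
      L (blockIdx i r) (blockIdx j c) = blockIdx (S i j) (Q i j r c))
    (τ : Fin ℓ → Equiv.Perm (Fin n)) (hτ : ∀ a, IsTransversal S (τ a))
    (hτdisj : ∀ a b : Fin ℓ, a ≠ b → ∀ i, τ a i ≠ τ b i)
    (hdecomp : ∀ (a : Fin ℓ) (i : Fin n), ∃ D : Fin m → Equiv.Perm (Fin m),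
      (∀ r, IsTransversal (Q i (τ a i)) (D r)) ∧
      (∀ r r' : Fin m, r ≠ r' → ∀ x, D r x ≠ D r' x)) :
    ∃ σ : Fin (ℓ * m) → Equiv.Perm (Fin (n * m)),
      (∀ a, IsTransversal L (σ a)) ∧
      (∀ a b : Fin (ℓ * m), a ≠ b → ∀ x, σ a x ≠ σ b x) ∧
      (∀ (a : Fin (ℓ * m)) (x : Fin (n * m)), ∃ (t : Fin ℓ) (i : Fin n) (r c : Fin m),
        x = blockIdx i r ∧ σ a x = blockIdx (τ t i) c) := by
  classical
  choose D hD1 hD2 using hdecomp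
  set e : Fin n × Fin m ≃ Fin (n * m) := blockEquiv hm with he
  set f : Fin ℓ × Fin m ≃ Fin (ℓ * m) := finProdFinEquiv with hf
  -- the permutation for index (t, k)
  set P : Fin ℓ → Fin m → Equiv.Perm (Fin (n * m)) := fun t k =>
    e.symm.trans ((Equiv.prodShear (τ t) (fun i => D t i k)).trans e) with hP
  have hPapp : ∀ (t : Fin ℓ) (k : Fin m) (i : Fin n) (r : Fin m),
      P t k (blockIdx i r) = blockIdx (τ t i) (D t i k r) := by
    intro t k i r
    have : e.symm (blockIdx i r) = (i, r) := e.symm_apply_apply (i, r)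
    simp [hP, Equiv.trans_apply, this, Equiv.prodShear]
    rfl
  refine ⟨fun a => P (f.symm a).1 (f.symm a).2, ?_, ?_, ?_⟩
  · intro a
    set t := (f.symm a).1
    set k := (f.symm a).2
    set E : Fin n × Fin m ≃ Fin n × Fin m :=
      Equiv.prodShear (Equiv.ofBijective _ (hτ t))
        (fun i => Equiv.ofBijective _ (hD1 t i k)) with hE
    have key : (fun x => L x (P t k x)) = ⇑(e.symm.trans (E.trans e)) := by
      funext x
      rcases e.surjective x with ⟨⟨i, r⟩, rfl⟩
      have hx : e (i, r) = blockIdx i r := rfl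
      rw [hx, hPapp, hL]
      simp [hE, Equiv.trans_apply, Equiv.symm_apply_apply, ← hx, Equiv.prodShear,
        Equiv.ofBijective]
      rfl
    show Function.Bijective (fun x => L x (P t k x))
    rw [key]
    exact (e.symm.trans (E.trans e)).bijective
  · intro a b hab x
    rcases e.surjective x with ⟨⟨i, r⟩, rfl⟩
    have hx : e (i, r) = blockIdx i r := rfl
    rw [hx, hPapp, hPapp]
    intro h
    obtain ⟨h1, h2⟩ := blockIdx_inj hm h
    have hne : f.symm a ≠ f.symm b := fun h => hab (by simpa using congrArg f h)
    by_cases ht : (f.symm a).1 = (f.symm b).1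
    · have hk : (f.symm a).2 ≠ (f.symm b).2 := by
        intro hk; exact hne (Prod.ext ht hk)
      rw [ht] at h2
      exact hD2 (f.symm b).1 i (f.symm a).2 (f.symm b).2 hk r h2
    · exact hτdisj _ _ ht i h1
  · intro a x
    rcases e.surjective x with ⟨⟨i, r⟩, rfl⟩
    have hx : e (i, r) = blockIdx i r := rfl
    exact ⟨(f.symm a).1, i, r, D (f.symm a).1 i (f.symm a).2 r, hx ▸ rfl,
      by rw [hx, hPapp]⟩
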